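/- The error term in the sharp ruin asymptotics is controlled by: (π²/4)·Σ_{2 ≤ k < T/2} k² · (cos(πk/T)/cos(π/T))^{n−1} ≤ C·e^{−π²n/T²} for some constant C, for all n, T with T sufficiently large and n/T² sufficiently large. -/

import Mathlib

set_option maxHeartbeats 1000000

open Real Finset

theorem cos_upper_aux {x : ℝ} (hx0 : 0 < x) (hx : x ≤ 2) :
    Real.cos x ≤ 1 - x^2/2 + x^4/16 := by
  have h2 : Real.sin (x/2) ^ 2 = 1/2 - Real.cos (2*(x/2))/2 := Real.sin_sq_eq_half_sub (x/2)
  have hco : Real.cos x = 1 - 2 * Real.sin (x/2)^2 := by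
    rw [h2]; ring_nf
  have hs := Real.sin_gt_sub_cube (by linarith : (0:ℝ) < x/2)
  have hxx : 0 ≤ x * (4 - x^2) := mul_nonneg hx0.le (by nlinarith)
  have hpos : 0 ≤ x/2 - (x/2)^3/4 := by nlinarith
  have hsq : (x/2 - (x/2)^3/4)^2 ≤ Real.sin (x/2)^2 := by
    apply sq_le_sq' <;> nlinarith
  have h6 : 0 ≤ x^6 := by positivity
  rw [hco]; nlinarith [hsq, h6]

theorem ratio_bound_aux {u : ℝ} {k : ℕ} (hu0 : 0 < u) (hu : u ≤ π/100) (hk2 : 2 ≤ k)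
    (hku : (k:ℝ) * u < π/2) :
    Real.cos ((k:ℝ)*u) / Real.cos u ≤ Real.exp (-((1 + (k:ℝ)/10) * u^2)) := by
  have hpig : (3.1415:ℝ) < π := by linarith [Real.pi_gt_d6]
  have hpil : π < 3.1416 := by linarith [Real.pi_lt_d6]
  have hk2' : (2:ℝ) ≤ (k:ℝ) := by exact_mod_cast hk2
  have hu2 : u ≤ 0.0315 := by nlinarith
  have hx0 : 0 < (k:ℝ)*u := by positivity
  have hcosu_lb : 1 - u^2/2 < Real.cos u := Real.one_sub_sq_div_two_lt_cos hu0.ne'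
  have hcosu_pos : 0 < Real.cos u := by nlinarith [sq_nonneg u]
  rw [div_le_iff₀ hcosu_pos]
  by_cases hcase : (k:ℝ)*u ≤ 1
  · -- small x case
    have hx2le : ((k:ℝ)*u)^2 ≤ 1 := by nlinarith
    have hx4 : ((k:ℝ)*u)^4 ≤ ((k:ℝ)*u)^2 := by
      nlinarith [mul_nonneg (sq_nonneg ((k:ℝ)*u)) (by linarith : (0:ℝ) ≤ 1 - ((k:ℝ)*u)^2)]
    have hcx : Real.cos ((k:ℝ)*u) ≤ 1 - (7/16)*((k:ℝ)*u)^2 := by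
      have := cos_upper_aux hx0 (by linarith)
      nlinarith
    have hslt : (1 + (k:ℝ)/10) * u^2 ≤ 1/2 := by
      have h1 : (k:ℝ)/10 * u ≤ 1/10 := by nlinarith
      nlinarith [sq_nonneg u]
    have hexp : 1 - (1 + (k:ℝ)/10) * u^2 ≤ Real.exp (-((1 + (k:ℝ)/10) * u^2)) := by
      linarith [Real.add_one_le_exp (-((1 + (k:ℝ)/10) * u^2))]
    have h1 : (0:ℝ) ≤ 7/16*(k:ℝ)^2 - (k:ℝ)/10 - 3/2 := by nlinarith [sq_nonneg ((k:ℝ)-2)]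
    have h2 : 0 ≤ u^2 * (7/16*(k:ℝ)^2 - (k:ℝ)/10 - 3/2) := mul_nonneg (sq_nonneg u) h1
    have h3 : (0:ℝ) ≤ (1 + (k:ℝ)/10) * u^4 / 2 := by positivity
    have halg : 1 - (7/16)*((k:ℝ)*u)^2 ≤ (1 - (1 + (k:ℝ)/10) * u^2) * (1 - u^2/2) := by
      nlinarith
    have key : Real.cos ((k:ℝ)*u) ≤ (1 - (1 + (k:ℝ)/10) * u^2) * Real.cos u :=
      calc Real.cos ((k:ℝ)*u) ≤ 1 - (7/16)*((k:ℝ)*u)^2 := hcx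
        _ ≤ (1 - (1 + (k:ℝ)/10) * u^2) * (1 - u^2/2) := halg
        _ ≤ (1 - (1 + (k:ℝ)/10) * u^2) * Real.cos u := by
            apply mul_le_mul_of_nonneg_left hcosu_lb.le (by linarith)
    calc Real.cos ((k:ℝ)*u) ≤ (1 - (1 + (k:ℝ)/10) * u^2) * Real.cos u := key
      _ ≤ Real.exp (-((1 + (k:ℝ)/10) * u^2)) * Real.cos u :=
          mul_le_mul_of_nonneg_right hexp hcosu_pos.le
  · -- large x case
    push_neg at hcase
    have hcx : Real.cos ((k:ℝ)*u) ≤ 2/3 :=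
      calc Real.cos ((k:ℝ)*u) ≤ Real.cos 1 :=
        Real.cos_le_cos_of_nonneg_of_le_pi zero_le_one (by linarith) hcase.le
        _ ≤ 2/3 := by linarith [Real.cos_one_le]
    have hs_small : (1 + (k:ℝ)/10) * u^2 ≤ 6/1000 := by
      have h1 : (k:ℝ)/10 * u^2 ≤ π/20 * u := by nlinarith
      nlinarith [sq_nonneg u]
    have hs0 : (0:ℝ) ≤ (1 + (k:ℝ)/10) * u^2 := by positivity
    have hexp : (994:ℝ)/1000 ≤ Real.exp (-((1 + (k:ℝ)/10) * u^2)) := by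
      linarith [Real.add_one_le_exp (-((1 + (k:ℝ)/10) * u^2))]
    have hcu : (999:ℝ)/1000 ≤ Real.cos u := by nlinarith [sq_nonneg u]
    nlinarith

/-- The tail of the Feller ruin series is controlled by its first term:
`(π²/4) Σ_{2 ≤ k < T/2} k² (cos(πk/T)/cos(π/T))^{n−1} ≤ C e^{−π²n/T²}`
for `T` sufficiently large and `n/T²` sufficiently large. -/
theorem stmt8 : ∃ C > (0:ℝ), ∃ T₀ : ℕ, ∃ A : ℝ, ∀ T n : ℕ, T₀ ≤ T →
    A ≤ (n : ℝ) / (T : ℝ) ^ 2 →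
    π ^ 2 / 4 *
      ∑ k ∈ (Finset.range T).filter (fun k => 2 ≤ k ∧ 2 * k < T),
        (k : ℝ) ^ 2 * (Real.cos (π * k / T) / Real.cos (π / T)) ^ (n - 1)
    ≤ C * Real.exp (-π ^ 2 * n / (T : ℝ) ^ 2) := by
  refine ⟨10000, by norm_num, 100, 1, fun T n hT hA => ?_⟩
  have hpig : (3.1415:ℝ) < π := by linarith [Real.pi_gt_d6]
  have hpil : π < 3.1416 := by linarith [Real.pi_lt_d6]
  have hT100 : (100:ℝ) ≤ (T:ℝ) := by exact_mod_cast hT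
  have hT0 : (0:ℝ) < (T:ℝ) := by linarith
  have hT4 : (10000:ℝ) ≤ (T:ℝ)^2 := by nlinarith
  have hTsq : (T:ℝ)^2 ≤ (n:ℝ) := by
    rw [le_div_iff₀ (by positivity)] at hA; linarith
  have hn4 : (10000:ℝ) ≤ (n:ℝ) := by nlinarith
  have hn1 : 1 ≤ n := by
    by_contra h
    push_neg at h
    interval_cases n <;> norm_num at hn4
  have hcast : ((n - 1 : ℕ) : ℝ) = (n:ℝ) - 1 := by
    rw [Nat.cast_sub hn1]; norm_num
  set E : ℝ := Real.exp (-π ^ 2 * n / (T : ℝ) ^ 2) with hE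
  have hE0 : 0 < E := Real.exp_pos _
  set u : ℝ := π / T with hudef
  have hu0 : 0 < u := by positivity
  have hu : u ≤ π / 100 := by
    rw [hudef]
    apply div_le_div_of_nonneg_left (by linarith) (by norm_num) hT100
  set q : ℝ := 121/149 with hq
  -- per-term bound
  have hterm : ∀ k ∈ (Finset.range T).filter (fun k => 2 ≤ k ∧ 2 * k < T),
      (k : ℝ) ^ 2 * (Real.cos (π * k / T) / Real.cos u) ^ (n - 1)
      ≤ (100 * q ^ k) * E := by
    intro k hk
    simp only [Finset.mem_filter, Finset.mem_range] at hk
    obtain ⟨hkT, hk2, hkT2⟩ := hk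
    have hk2' : (2:ℝ) ≤ (k:ℝ) := by exact_mod_cast hk2
    have hkT2' : 2*(k:ℝ) < (T:ℝ) := by exact_mod_cast hkT2
    have hxeq : π * k / T = (k:ℝ) * u := by rw [hudef]; ring
    have hku : (k:ℝ) * u < π/2 := by
      rw [hudef, mul_div_assoc']
      rw [div_lt_div_iff₀ hT0 (by norm_num : (0:ℝ) < 2)]
      nlinarith
    have hx0 : 0 < (k:ℝ)*u := mul_pos (by linarith) hu0
    have hr0 : 0 ≤ Real.cos ((k:ℝ)*u) / Real.cos u := by
      apply div_nonneg
      · exact Real.cos_nonneg_of_mem_Icc ⟨by linarith, hku.le⟩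
      · exact (Real.cos_pos_of_mem_Ioo ⟨by linarith, by nlinarith⟩).le
    have hr := ratio_bound_aux hu0 hu hk2 hku
    have hpow : (Real.cos ((k:ℝ)*u) / Real.cos u) ^ (n-1)
        ≤ Real.exp (-((1 + (k:ℝ)/10) * u^2)) ^ (n-1) := pow_le_pow_left₀ hr0 hr _
    rw [← Real.exp_nat_mul] at hpow
    -- exponent comparison
    have hkey : (n:ℝ) + (T:ℝ)^2/20 * (k:ℝ) ≤ ((n:ℝ)-1)*(1+(k:ℝ)/10) := by
      have hfac : (0:ℝ) ≤ ((n:ℝ)-1)/10 - (T:ℝ)^2/20 - 499 := by nlinarith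
      nlinarith [mul_nonneg (by linarith : (0:ℝ) ≤ (k:ℝ)-2)
        (by linarith : (0:ℝ) ≤ ((n:ℝ)-1)/10 - (T:ℝ)^2/20)]
    have hexpo : ((n-1:ℕ):ℝ) * (-((1 + (k:ℝ)/10) * u^2))
        ≤ -π^2*(n:ℝ)/(T:ℝ)^2 + (-(π^2/20) * (k:ℝ)) := by
      rw [hcast, hudef, ← sub_nonneg]
      have heq : -π^2*(n:ℝ)/(T:ℝ)^2 + (-(π^2/20) * (k:ℝ))
          - ((n:ℝ)-1) * (-((1 + (k:ℝ)/10) * (π/(T:ℝ))^2))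
          = π^2/(T:ℝ)^2 * (((n:ℝ)-1)*(1+(k:ℝ)/10) - ((n:ℝ) + (T:ℝ)^2/20 * (k:ℝ))) := by
        field_simp
        ring
      rw [heq]
      apply mul_nonneg (by positivity) (by linarith)
    have hpow2 : (Real.cos ((k:ℝ)*u) / Real.cos u) ^ (n-1)
        ≤ E * Real.exp (-(π^2/20) * (k:ℝ)) := by
      calc (Real.cos ((k:ℝ)*u) / Real.cos u) ^ (n-1)
          ≤ Real.exp (((n-1:ℕ):ℝ) * (-((1 + (k:ℝ)/10) * u^2))) := hpow
        _ ≤ Real.exp (-π^2*(n:ℝ)/(T:ℝ)^2 + (-(π^2/20) * (k:ℝ))) := Real.exp_le_exp.2 hexpo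
        _ = E * Real.exp (-(π^2/20) * (k:ℝ)) := by rw [Real.exp_add]
    -- k² ≤ 100 (121/100)^k
    have hb := one_add_mul_le_pow (by norm_num : (-2:ℝ) ≤ 1/10) k
    have hk10 : (k:ℝ) ≤ 10*(11/10:ℝ)^k := by
      have h1 : (1:ℝ) + (k:ℝ)*(1/10) ≤ (11/10:ℝ)^k := by
        exact hb.trans_eq (by norm_num)
      nlinarith
    have hksq : (k:ℝ)^2 ≤ 100*(121/100:ℝ)^k := by
      have h2 : ((k:ℝ))^2 ≤ (10*(11/10:ℝ)^k)^2 :=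
        pow_le_pow_left₀ (by positivity) hk10 2
      have h3 : (10*(11/10:ℝ)^k)^2 = 100*(121/100:ℝ)^k := by
        rw [mul_pow, ← pow_mul, mul_comm k 2, pow_mul]
        norm_num
      linarith [h3 ▸ h2]
    -- exp(-π²/20)^k ≤ (100/149)^k
    have hbase : Real.exp (-(π^2/20)) ≤ 100/149 := by
      have h149 : (149:ℝ)/100 ≤ Real.exp (π^2/20) := by
        nlinarith [Real.add_one_le_exp (π^2/20)]
      rw [Real.exp_neg]
      calc (Real.exp (π^2/20))⁻¹ ≤ ((149:ℝ)/100)⁻¹ := by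
            apply inv_anti₀ (by norm_num) h149
        _ = 100/149 := by norm_num
    have hexpk : Real.exp (-(π^2/20) * (k:ℝ)) ≤ (100/149:ℝ)^k := by
      rw [show -(π^2/20) * (k:ℝ) = (k:ℝ) * (-(π^2/20)) by ring, Real.exp_nat_mul]
      exact pow_le_pow_left₀ (Real.exp_nonneg _) hbase k
    calc (k : ℝ) ^ 2 * (Real.cos (π * k / T) / Real.cos u) ^ (n - 1)
        = (k : ℝ) ^ 2 * (Real.cos ((k:ℝ)*u) / Real.cos u) ^ (n - 1) := by rw [hxeq]
      _ ≤ (k : ℝ) ^ 2 * (E * Real.exp (-(π^2/20) * (k:ℝ))) :=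
          mul_le_mul_of_nonneg_left hpow2 (sq_nonneg _)
      _ = ((k:ℝ)^2 * Real.exp (-(π^2/20) * (k:ℝ))) * E := by ring
      _ ≤ ((100*(121/100:ℝ)^k) * (100/149:ℝ)^k) * E := by
          apply mul_le_mul_of_nonneg_right _ hE0.le
          exact mul_le_mul hksq hexpk (Real.exp_nonneg _) (by positivity)
      _ = (100 * q ^ k) * E := by
          have hmp : (121/100:ℝ)^k * (100/149:ℝ)^k = (121/149:ℝ)^k := by
            rw [← mul_pow]; norm_num
          rw [hq, ← hmp]; ring
  have hsum1 := Finset.sum_le_sum hterm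
  have hsub : ∑ k ∈ (Finset.range T).filter (fun k => 2 ≤ k ∧ 2 * k < T), (100 * q ^ k) * E
      ≤ ∑ k ∈ Finset.range T, (100 * q ^ k) * E := by
    apply Finset.sum_le_sum_of_subset_of_nonneg (Finset.filter_subset _ _)
    intro i _ _
    have : (0:ℝ) < q := by rw [hq]; norm_num
    positivity
  have hfact : ∑ k ∈ Finset.range T, (100 * q ^ k) * E
      = (100*E) * ∑ k ∈ Finset.range T, q ^ k := by
    rw [Finset.mul_sum]
    apply Finset.sum_congr rfl
    intros; ring
  have hgeom : ∑ k ∈ Finset.range T, q ^ k ≤ 149/28 := by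
    have h1 : (0:ℝ) ≤ q^T := by rw [hq]; positivity
    rw [geom_sum_eq (by rw [hq]; norm_num : q ≠ 1)]
    rw [div_le_iff_of_neg (by rw [hq]; norm_num : q - 1 < 0)]
    rw [hq] at h1 ⊢
    nlinarith
  have htot : ∑ k ∈ (Finset.range T).filter (fun k => 2 ≤ k ∧ 2 * k < T),
      (k : ℝ) ^ 2 * (Real.cos (π * k / T) / Real.cos u) ^ (n - 1)
      ≤ (100*E) * (149/28) := by
    calc _ ≤ ∑ k ∈ (Finset.range T).filter (fun k => 2 ≤ k ∧ 2 * k < T), (100 * q ^ k) * E :=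
          hsum1
      _ ≤ ∑ k ∈ Finset.range T, (100 * q ^ k) * E := hsub
      _ = (100*E) * ∑ k ∈ Finset.range T, q ^ k := hfact
      _ ≤ (100*E) * (149/28) := by
          apply mul_le_mul_of_nonneg_left hgeom (by positivity)
  have hpi2 : π^2 ≤ 10 := by nlinarith
  have hsumnn : (0:ℝ) ≤ π^2/4 := by positivity
  calc π ^ 2 / 4 * ∑ k ∈ (Finset.range T).filter (fun k => 2 ≤ k ∧ 2 * k < T),
        (k : ℝ) ^ 2 * (Real.cos (π * k / T) / Real.cos u) ^ (n - 1)
      ≤ π^2/4 * ((100*E) * (149/28)) := mul_le_mul_of_nonneg_left htot hsumnn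
    _ ≤ 10000 * E := by nlinarith [mul_le_mul_of_nonneg_right hpi2 hE0.le]
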